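/- If x = (x₁,…,xₙ) ∈ ℝⁿ satisfies ⊞_{i∈[n]} x_i = 0 (the n-ary operation), then for every natural number p, Σ_{i∈[n]} x_i^{2p+1} = 0. -/
import Mathlib


open Filter Finset

/-- The binary idempotent operation `⊞`. -/
noncomputable def bop (a b : ℝ) : ℝ :=
  if |b| < |a| then a else if |a| < |b| then b else (a + b) / 2

/-- The unique real `(2p+1)`-th root of `t`. -/
noncomputable def oddRoot (p : ℕ) (t : ℝ) : ℝ :=
  Real.sign t * |t| ^ ((1 : ℝ) / (2 * (p : ℝ) + 1))

/-- `ξ_I[u](α) = Card{i ∈ I : u i = α} − Card{i ∈ I : u i = −α}`. -/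
noncomputable def xiMap {ι : Type*} (I : Finset ι) (u : ι → ℝ) (α : ℝ) : ℤ :=
  ((I.filter fun i => u i = α).card : ℤ) - ((I.filter fun i => u i = -α).card : ℤ)

/-- The residual index set `J_I(u)`. -/
noncomputable def resid {ι : Type*} (I : Finset ι) (u : ι → ℝ) : Finset ι :=
  I.filter fun i => xiMap I u (u i) ≠ 0

/-- The `n`-ary extension `⊞_{i ∈ I} u i` of the binary operation `⊞`. -/
noncomputable def Fop {ι : Type*} (I : Finset ι) (u : ι → ℝ) : ℝ :=
  if h : (resid I u).Nonempty then
    if 0 < xiMap I u ((resid I u).sup' h fun i => |u i|) then (resid I u).sup' h u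
    else if xiMap I u ((resid I u).sup' h fun i => |u i|) < 0 then (resid I u).inf' h u
    else 0
  else 0

/-- The Chebyshev norm `max_{i ∈ [n]} |x i|`. -/
noncomputable def chebNorm {n : ℕ} (x : Fin n → ℝ) : ℝ := ⨆ i, |x i|

/-- The ultrametric distance `d_⊞(x,y) = max_i |x_i ⊟ y_i|`. -/
noncomputable def dB {n : ℕ} (x y : Fin n → ℝ) : ℝ := ⨆ i, |bop (x i) (-(y i))|


lemma xiMap_neg' {ι : Type*} (I : Finset ι) (u : ι → ℝ) (α : ℝ) :
    xiMap I u (-α) = - xiMap I u α := by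
  simp only [xiMap, neg_neg]; ring

lemma xi_zero_of_Fop_zero (n : ℕ) (x : Fin n → ℝ) (h : Fop Finset.univ x = 0) :
    ∀ i, xiMap Finset.univ x (x i) = 0 := by
  by_contra hc
  push_neg at hc
  obtain ⟨i, hi⟩ := hc
  have hne : (resid Finset.univ x).Nonempty :=
    ⟨i, by simp [resid, hi]⟩
  obtain ⟨j, hjJ, hjα⟩ := Finset.exists_mem_eq_sup' hne fun i => |x i|
  set α := (resid Finset.univ x).sup' hne fun i => |x i| with hαdef
  have hjxi : xiMap Finset.univ x (x j) ≠ 0 := by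
    have := (Finset.mem_filter.mp hjJ).2
    simpa using this
  have hα0 : xiMap Finset.univ x α ≠ 0 := by
    rcases abs_cases (x j) with ⟨he, _⟩ | ⟨he, _⟩
    · rw [hjα, he]; exact hjxi
    · rw [hjα, he, xiMap_neg']
      simpa using hjxi
  have hαpos : 0 < α := by
    rcases lt_or_eq_of_le (abs_nonneg (x j)) with hlt | heq
    · rw [hjα]; exact hlt
    · exfalso
      apply hα0
      rw [hjα, ← heq]
      have := xiMap_neg' Finset.univ x 0
      simp only [neg_zero] at this
      omega
  rcases lt_trichotomy (xiMap Finset.univ x α) 0 with hneg | hzero | hpos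
  · -- xi < 0: pick i0 with x i0 = -α, then inf' ≤ -α < 0 but Fop = inf' = 0
    have hcard : 0 < (Finset.univ.filter fun i => x i = -α).card := by
      have : xiMap Finset.univ x α =
          ((Finset.univ.filter fun i => x i = α).card : ℤ) -
          ((Finset.univ.filter fun i => x i = -α).card : ℤ) := rfl
      omega
    obtain ⟨i0, hi0⟩ := Finset.card_pos.mp hcard
    have hxi0 : x i0 = -α := (Finset.mem_filter.mp hi0).2
    have hi0J : i0 ∈ resid Finset.univ x := by
      simp only [resid, Finset.mem_filter, Finset.mem_univ, true_and]
      rw [hxi0, xiMap_neg']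
      omega
    have hinf : (resid Finset.univ x).inf' hne x ≤ -α :=
      hxi0 ▸ Finset.inf'_le x hi0J
    have hFop : Fop Finset.univ x = (resid Finset.univ x).inf' hne x := by
      rw [Fop, dif_pos hne, if_neg (by rw [← hαdef]; omega), if_pos (by rw [← hαdef]; exact hneg)]
    rw [hFop] at h
    linarith
  · exact hα0 hzero
  · have hcard : 0 < (Finset.univ.filter fun i => x i = α).card := by
      have : xiMap Finset.univ x α =
          ((Finset.univ.filter fun i => x i = α).card : ℤ) -
          ((Finset.univ.filter fun i => x i = -α).card : ℤ) := rfl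
      omega
    obtain ⟨i0, hi0⟩ := Finset.card_pos.mp hcard
    have hxi0 : x i0 = α := (Finset.mem_filter.mp hi0).2
    have hi0J : i0 ∈ resid Finset.univ x := by
      simp only [resid, Finset.mem_filter, Finset.mem_univ, true_and]
      rw [hxi0]
      omega
    have hsup : α ≤ (resid Finset.univ x).sup' hne x :=
      hxi0 ▸ Finset.le_sup' x hi0J
    have hFop : Fop Finset.univ x = (resid Finset.univ x).sup' hne x := by
      rw [Fop, dif_pos hne, if_pos (by rw [← hαdef]; exact hpos)]
    rw [hFop] at h
    linarith

/-- if the limit sum is zero then every generalized sum is zero. -/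
theorem stmt12 (n : ℕ) (x : Fin n → ℝ) (h : Fop Finset.univ x = 0) (p : ℕ) :
    ∑ i, x i ^ (2 * p + 1) = 0 := by
  classical
  have hxi := xi_zero_of_Fop_zero n x h
  have hcards : ∀ b : ℝ, b ∈ Finset.univ.image x →
      (Finset.univ.filter fun i => x i = -b).card
        = (Finset.univ.filter fun i => x i = b).card := by
    intro b hb
    obtain ⟨i, _, hib⟩ := Finset.mem_image.mp hb
    have := hxi i
    rw [hib] at this
    have : ((Finset.univ.filter fun i => x i = b).card : ℤ) -
        ((Finset.univ.filter fun i => x i = -b).card : ℤ) = 0 := this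
    omega
  have hcomp : ∑ i, x i ^ (2 * p + 1)
      = ∑ b ∈ Finset.univ.image x,
          (Finset.univ.filter fun i => x i = b).card • b ^ (2 * p + 1) :=
    Finset.sum_comp (fun t : ℝ => t ^ (2 * p + 1)) x
  rw [hcomp]
  refine Finset.sum_involution (fun b _ => -b) ?_ ?_ ?_ ?_
  · intro b hb
    rw [hcards b hb]
    have hodd : Odd (2 * p + 1) := ⟨p, by ring⟩
    rw [hodd.neg_pow]
    simp
  · intro b hb hfb hbb
    apply hfb
    have hb0 : b = 0 := by
      have h' : -b = b := hbb
      linarith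
    simp [hb0]
  · intro b hb
    have h1 : 0 < (Finset.univ.filter fun i => x i = b).card := by
      obtain ⟨i, _, hib⟩ := Finset.mem_image.mp hb
      exact Finset.card_pos.mpr ⟨i, by simp [hib]⟩
    have h2 : 0 < (Finset.univ.filter fun i => x i = -b).card := by
      rw [hcards b hb]; exact h1
    obtain ⟨i, hi⟩ := Finset.card_pos.mp h2
    exact Finset.mem_image.mpr ⟨i, Finset.mem_univ i, (Finset.mem_filter.mp hi).2⟩
  · intro b hb
    simp
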